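/- Assume conditions (A2) and (A3). Then the function G(λ) = ∫₀^∞ F(v_s(λ)) ds is finite for every λ ≥ 0, differentiable on (0,∞), and G′(λ) = F(λ)/ψ(λ) for every λ > 0. -/

import Mathlib

open MeasureTheory Real Set Filter
open Topology

/-- The (sub)-critical branching mechanism
`ψ(z) = b z + σ z² + ∫₀^∞ (e^{−z u} − 1 + z u) m(du)`. -/
noncomputable def psi (b σ : ℝ) (m : Measure ℝ) (z : ℝ) : ℝ :=
  b * z + σ * z ^ 2 + ∫ u in Ioi (0 : ℝ), (Real.exp (-(z * u)) - 1 + z * u) ∂m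

/-- Condition (A3): either `σ > 0` or `∫₀^1 u m(du) = ∞`. -/
def condA3 (σ : ℝ) (m : Measure ℝ) : Prop :=
  0 < σ ∨ ∫⁻ u in Ioc (0 : ℝ) 1, ENNReal.ofReal u ∂m = ⊤

/-- `v t λ ∈ (0, λ]` is the unique solution of `∫_{v_t(λ)}^{λ} dz/ψ(z) = t`
(the cumulant semigroup). -/
def IsCumulant (b σ : ℝ) (m : Measure ℝ) (v : ℝ → ℝ → ℝ) : Prop :=
  ∀ lam > (0 : ℝ), ∀ t ≥ (0 : ℝ),
    v t lam ∈ Ioc 0 lam ∧ ∫ z in (v t lam)..lam, (psi b σ m z)⁻¹ = t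

/-- The immigration mechanism `F(z) = β z + ∫₀^∞ (1 − e^{−z u}) n(du)`. -/
noncomputable def Fim (β : ℝ) (n : Measure ℝ) (z : ℝ) : ℝ :=
  β * z + ∫ u in Ioi (0 : ℝ), (1 - Real.exp (-(z * u))) ∂n

/-- Condition (A2): `∫₀^λ F(z)/ψ(z) dz < ∞` for some `λ > 0`. -/
def condA2 (b σ β : ℝ) (m n : Measure ℝ) : Prop :=
  ∃ lam > (0 : ℝ), IntegrableOn (fun z => Fim β n z / psi b σ m z) (Ioo 0 lam)

section helperlemmas
variable {b σ β : ℝ} {m n : Measure ℝ}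



lemma psi_integrand_nonneg {z u : ℝ} (hz : 0 ≤ z) (hu : 0 ≤ u) :
    0 ≤ Real.exp (-(z * u)) - 1 + z * u := by
  have := Real.add_one_le_exp (-(z * u))
  linarith

lemma psi_integrand_bound {R z u : ℝ} (hz : z ∈ Icc 0 R) (hu : 0 < u) :
    ‖Real.exp (-(z * u)) - 1 + z * u‖ ≤ (R ^ 2 + R) * min u (u ^ 2) := by
  obtain ⟨hz0, hzR⟩ := hz
  have hR : 0 ≤ R := le_trans hz0 hzR
  have hx : 0 ≤ z * u := mul_nonneg hz0 hu.le
  have hexple : Real.exp (-(z * u)) ≤ 1 := Real.exp_le_one_iff.2 (by linarith)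
  rw [Real.norm_eq_abs, abs_of_nonneg (psi_integrand_nonneg hz0 hu.le)]
  rcases le_or_gt 1 u with h1 | h1
  · have hmin : min u (u ^ 2) = u := min_eq_left (by nlinarith)
    rw [hmin]
    have hzu : z * u ≤ R * u := mul_le_mul_of_nonneg_right hzR hu.le
    nlinarith [sq_nonneg R, mul_nonneg (mul_nonneg hR hR) hu.le]
  · have hmin : min u (u ^ 2) = u ^ 2 := min_eq_right (by nlinarith)
    rw [hmin]
    have hzR2 : z * z ≤ R * R := mul_le_mul hzR hzR hz0 hR
    have hRu2 : 0 ≤ R * u ^ 2 := mul_nonneg hR (sq_nonneg u)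
    rcases le_or_gt (z * u) 1 with h2 | h2
    · have habs : |(-(z * u))| ≤ 1 := by rw [abs_neg, abs_of_nonneg hx]; exact h2
      have h3 := Real.abs_exp_sub_one_sub_id_le habs
      have h4 : Real.exp (-(z * u)) - 1 + z * u ≤ (z * u) ^ 2 := by
        have := le_abs_self (Real.exp (-(z * u)) - 1 - (-(z * u)))
        have h5 : (-(z * u)) ^ 2 = (z * u) ^ 2 := by ring
        linarith [h3, this.trans h3]
      nlinarith
    · nlinarith

lemma Fim_integrand_nonneg {z u : ℝ} (hz : 0 ≤ z) (hu : 0 ≤ u) :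
    0 ≤ 1 - Real.exp (-(z * u)) := by
  have : Real.exp (-(z * u)) ≤ 1 := Real.exp_le_one_iff.2 (by nlinarith [mul_nonneg hz hu])
  linarith

lemma Fim_integrand_bound {R z u : ℝ} (hz : z ∈ Icc 0 R) (hu : 0 < u) :
    ‖1 - Real.exp (-(z * u))‖ ≤ (R + 1) * min 1 u := by
  obtain ⟨hz0, hzR⟩ := hz
  have hR : 0 ≤ R := le_trans hz0 hzR
  have hx : 0 ≤ z * u := mul_nonneg hz0 hu.le
  have h1 : 1 - Real.exp (-(z * u)) ≤ z * u := by
    have := Real.add_one_le_exp (-(z * u)); linarith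
  have hexple : Real.exp (-(z * u)) ≤ 1 := Real.exp_le_one_iff.2 (by linarith)
  have hpos : 0 < Real.exp (-(z * u)) := Real.exp_pos _
  rw [Real.norm_eq_abs, abs_of_nonneg (by linarith)]
  rcases le_or_gt 1 u with h | h
  · have hmin : min 1 u = 1 := min_eq_left h
    rw [hmin]; nlinarith
  · have hmin : min 1 u = u := min_eq_right h.le
    rw [hmin]
    have : z * u ≤ R * u := mul_le_mul_of_nonneg_right hzR hu.le
    nlinarith



lemma psi_integrand_integrable (hm : IntegrableOn (fun u => min u (u ^ 2)) (Ioi 0) m)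
    {z : ℝ} (hz : 0 ≤ z) :
    IntegrableOn (fun u => Real.exp (-(z * u)) - 1 + z * u) (Ioi 0) m := by
  refine Integrable.mono' (hm.const_mul (z ^ 2 + z))
    ((Continuous.aestronglyMeasurable (by fun_prop))) ?_
  rw [ae_restrict_iff' measurableSet_Ioi]
  exact ae_of_all _ fun u hu => psi_integrand_bound ⟨hz, le_rfl⟩ hu

lemma psi_nonneg (hb : 0 ≤ b) (hσ : 0 ≤ σ) {z : ℝ} (hz : 0 ≤ z) :
    0 ≤ psi b σ m z := by
  have h1 : 0 ≤ ∫ u in Ioi (0 : ℝ), (Real.exp (-(z * u)) - 1 + z * u) ∂m :=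
    setIntegral_nonneg measurableSet_Ioi fun u hu =>
      psi_integrand_nonneg hz (le_of_lt hu)
  have : 0 ≤ b * z := mul_nonneg hb hz
  have : 0 ≤ σ * z ^ 2 := mul_nonneg hσ (sq_nonneg z)
  unfold psi; linarith

lemma psi_pos (hb : 0 ≤ b) (hσ : 0 ≤ σ)
    (hm : IntegrableOn (fun u => min u (u ^ 2)) (Ioi 0) m)
    (hA3 : condA3 σ m) {z : ℝ} (hz : 0 < z) : 0 < psi b σ m z := by
  have h1 : 0 ≤ ∫ u in Ioi (0 : ℝ), (Real.exp (-(z * u)) - 1 + z * u) ∂m :=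
    setIntegral_nonneg measurableSet_Ioi fun u hu =>
      psi_integrand_nonneg hz.le (le_of_lt hu)
  have hbz : 0 ≤ b * z := mul_nonneg hb hz.le
  rcases hA3 with hσ' | hminf
  · have : 0 < σ * z ^ 2 := mul_pos hσ' (by positivity)
    unfold psi; linarith
  · have hmeaspos : 0 < m (Ioc (0 : ℝ) 1) := by
      by_contra h
      push_neg at h
      have h0 : m (Ioc (0 : ℝ) 1) = 0 := le_antisymm h zero_le
      rw [setLIntegral_measure_zero _ _ h0] at hminf
      simp at hminf
    have hpos : 0 < ∫ u in Ioi (0 : ℝ), (Real.exp (-(z * u)) - 1 + z * u) ∂m := by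
      rw [setIntegral_pos_iff_support_of_nonneg_ae ?hnn (psi_integrand_integrable hm hz.le)]
      case hnn =>
        rw [EventuallyLE, ae_restrict_iff' measurableSet_Ioi]
        exact ae_of_all _ fun u hu => psi_integrand_nonneg hz.le (le_of_lt hu)
      refine lt_of_lt_of_le hmeaspos (measure_mono ?_)
      intro u hu
      refine ⟨?_, hu.1⟩
      have hzu : z * u ≠ 0 := ne_of_gt (mul_pos hz hu.1)
      have hlt := Real.add_one_lt_exp (x := -(z * u)) (by simpa using hzu)
      simp only [Function.mem_support]
      intro hcontra
      linarith
    have hσz : 0 ≤ σ * z ^ 2 := mul_nonneg hσ (sq_nonneg z)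
    unfold psi; linarith


lemma psi_continuousAt (hm : IntegrableOn (fun u => min u (u ^ 2)) (Ioi 0) m)
    {z₀ : ℝ} (hz₀ : 0 < z₀) : ContinuousAt (psi b σ m) z₀ := by
  unfold psi
  refine ContinuousAt.add (by fun_prop) ?_
  refine continuousAt_of_dominated
    (bound := fun u => ((2 * z₀) ^ 2 + 2 * z₀) * min u (u ^ 2))
    (Filter.Eventually.of_forall fun z =>
      (Continuous.aestronglyMeasurable (by fun_prop))) ?_ (hm.const_mul _) ?_
  · filter_upwards [Ioo_mem_nhds hz₀ (by linarith : z₀ < 2 * z₀)] with z hz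
    rw [ae_restrict_iff' measurableSet_Ioi]
    exact ae_of_all _ fun u hu =>
      psi_integrand_bound ⟨hz.1.le, hz.2.le⟩ hu
  · exact ae_of_all _ fun u => (by fun_prop : Continuous fun z => Real.exp (-(z * u)) - 1 + z * u).continuousAt

lemma Fim_continuousAt (hn : IntegrableOn (fun u => min 1 u) (Ioi 0) n)
    {z₀ : ℝ} (hz₀ : 0 < z₀) : ContinuousAt (Fim β n) z₀ := by
  unfold Fim
  refine ContinuousAt.add (by fun_prop) ?_
  refine continuousAt_of_dominated
    (bound := fun u => (2 * z₀ + 1) * min 1 u)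
    (Filter.Eventually.of_forall fun z =>
      (Continuous.aestronglyMeasurable (by fun_prop))) ?_ (hn.const_mul _) ?_
  · filter_upwards [Ioo_mem_nhds hz₀ (by linarith : z₀ < 2 * z₀)] with z hz
    rw [ae_restrict_iff' measurableSet_Ioi]
    exact ae_of_all _ fun u hu => Fim_integrand_bound ⟨hz.1.le, hz.2.le⟩ hu
  · exact ae_of_all _ fun u => (by fun_prop : Continuous fun z => 1 - Real.exp (-(z * u))).continuousAt

lemma Fim_nonneg (hβ : 0 ≤ β) {z : ℝ} (hz : 0 ≤ z) : 0 ≤ Fim β n z := by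
  have h1 : 0 ≤ ∫ u in Ioi (0 : ℝ), (1 - Real.exp (-(z * u))) ∂n :=
    setIntegral_nonneg measurableSet_Ioi fun u hu => Fim_integrand_nonneg hz (le_of_lt hu)
  have : 0 ≤ β * z := mul_nonneg hβ hz
  unfold Fim; linarith

lemma Fim_zero : Fim β n 0 = 0 := by
  unfold Fim; simp


lemma key_lemma (hb : 0 ≤ b) (hσ : 0 ≤ σ) (hβ : 0 ≤ β)
    (hm : IntegrableOn (fun u => min u (u ^ 2)) (Ioi 0) m)
    (hn : IntegrableOn (fun u => min 1 u) (Ioi 0) n)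
    (hA2 : condA2 b σ β m n) (hA3 : condA3 σ m)
    (v : ℝ → ℝ → ℝ) (hv : IsCumulant b σ m v)
    {lam : ℝ} (hlam : 0 < lam) :
    IntegrableOn (fun s => Fim β n (v s lam)) (Ioi 0) ∧
    IntegrableOn (fun z => Fim β n z / psi b σ m z) (Ioc 0 lam) ∧
    ∫ s in Ioi (0:ℝ), Fim β n (v s lam) =
      ∫ z in Ioc (0:ℝ) lam, Fim β n z / psi b σ m z := by
  set g : ℝ → ℝ := fun z => (psi b σ m z)⁻¹ with hg_def
  set g2 : ℝ → ℝ := fun z => Fim β n z / psi b σ m z with hg2_def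
  set T : ℝ → ℝ := fun x => ∫ z in x..lam, g z with hT_def
  have hψpos : ∀ z : ℝ, 0 < z → 0 < psi b σ m z := fun z hz => psi_pos hb hσ hm hA3 hz
  have hψcont : ContinuousOn (psi b σ m) (Ioi 0) := fun z hz =>
    (psi_continuousAt hm hz).continuousWithinAt
  have hFcont : ContinuousOn (Fim β n) (Ioi 0) := fun z hz =>
    (Fim_continuousAt hn hz).continuousWithinAt
  have hgcont : ContinuousOn g (Ioi 0) := hψcont.inv₀ fun z hz => (hψpos z hz).ne'
  have hg2cont : ContinuousOn g2 (Ioi 0) :=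
    hFcont.div hψcont fun z hz => (hψpos z hz).ne'
  have huIcc : ∀ {x y : ℝ}, 0 < x → 0 < y → uIcc x y ⊆ Ioi 0 := by
    intro x y hx hy w hw
    exact lt_of_lt_of_le (lt_min hx hy) hw.1
  have hgii : ∀ {x y : ℝ}, 0 < x → 0 < y → IntervalIntegrable g volume x y :=
    fun hx hy => (hgcont.mono (huIcc hx hy)).intervalIntegrable
  have hgnn : ∀ z : ℝ, 0 < z → 0 ≤ g z := fun z hz => (inv_nonneg).2 (hψpos z hz).le
  -- T facts
  have hTsplit : ∀ {x y : ℝ}, 0 < x → 0 < y → y ≤ lam →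
      (∫ z in x..y, g z) + T y = T x := fun {x y} hx hy _ =>
    intervalIntegral.integral_add_adjacent_intervals (hgii hx hy) (hgii hy hlam)
  have hTanti : ∀ {x y : ℝ}, 0 < x → x < y → y ≤ lam → T y < T x := by
    intro x y hx hxy hyl
    have hpos : 0 < ∫ z in x..y, g z :=
      intervalIntegral.intervalIntegral_pos_of_pos_on (hgii hx (hx.trans hxy))
        (fun w hw => inv_pos.2 (hψpos w (hx.trans hw.1))) hxy
    have := hTsplit hx (hx.trans hxy) hyl
    linarith
  have hTle : ∀ {x y : ℝ}, 0 < x → x ≤ y → y ≤ lam → T y ≤ T x := by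
    intro x y hx hxy hyl
    rcases eq_or_lt_of_le hxy with rfl | h
    · exact le_rfl
    · exact (hTanti hx h hyl).le
  have hTlam : T lam = 0 := intervalIntegral.integral_same
  have hTnonneg : ∀ {x : ℝ}, 0 < x → x ≤ lam → 0 ≤ T x := by
    intro x hx hxl
    rw [← hTlam]
    exact hTle hx hxl le_rfl
  have hvmem : ∀ t : ℝ, 0 ≤ t → v t lam ∈ Ioc 0 lam := fun t ht => (hv lam hlam t ht).1
  have hvT : ∀ t : ℝ, 0 ≤ t → T (v t lam) = t := fun t ht => (hv lam hlam t ht).2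
  have hTinj : ∀ {x y : ℝ}, x ∈ Ioc 0 lam → y ∈ Ioc 0 lam → T x = T y → x = y := by
    intro x y hx hy hxy
    rcases lt_trichotomy x y with h | h | h
    · exact absurd hxy (ne_of_gt (hTanti hx.1 h hy.2))
    · exact h
    · exact absurd hxy (ne_of_lt (hTanti hy.1 h hx.2))
  have hvTz : ∀ {z : ℝ}, z ∈ Ioc 0 lam → v (T z) lam = z := by
    intro z hz
    have ht := hTnonneg hz.1 hz.2
    exact hTinj (hvmem _ ht) hz (hvT _ ht)
  -- comparison facts
  have hvlt : ∀ {a t : ℝ}, a ∈ Ioc 0 lam → 0 ≤ t → T a < t → v t lam < a := by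
    intro a t ha ht h
    by_contra hcon
    push_neg at hcon
    have := hTle ha.1 hcon (hvmem t ht).2
    rw [hvT t ht] at this
    linarith
  have hvgt : ∀ {a t : ℝ}, a ∈ Ioc 0 lam → 0 ≤ t → t < T a → a < v t lam := by
    intro a t ha ht h
    by_contra hcon
    push_neg at hcon
    have := hTle (hvmem t ht).1 hcon ha.2
    rw [hvT t ht] at this
    linarith
  -- continuity of v in time
  have hvcont : ContinuousOn (fun s => v s lam) (Ici 0) := by
    intro t ht
    have ht0 : (0:ℝ) ≤ t := ht
    rw [ContinuousWithinAt]
    refine tendsto_order.2 ⟨?_, ?_⟩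
    · intro a ha
      rcases le_or_gt a 0 with ha0 | ha0
      · filter_upwards [self_mem_nhdsWithin] with s hs
        exact lt_of_le_of_lt ha0 (hvmem s hs).1
      · have hamem : a ∈ Ioc 0 lam := ⟨ha0, ha.le.trans (hvmem t ht0).2⟩
        have hTa : t < T a := by
          have := hTanti ha0 ha (hvmem t ht0).2
          rwa [hvT t ht0] at this
        filter_upwards [self_mem_nhdsWithin,
          eventually_nhdsWithin_of_eventually_nhds (tendsto_id.eventually_lt_const hTa)]
          with s hs hs2
        exact hvgt hamem hs hs2
    · intro a ha
      rcases le_or_gt a lam with halam | halam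
      · have hamem : a ∈ Ioc 0 lam := ⟨(hvmem t ht0).1.trans ha, halam⟩
        have hTa : T a < t := by
          have := hTanti (hvmem t ht0).1 ha halam
          rwa [hvT t ht0] at this
        filter_upwards [self_mem_nhdsWithin,
          eventually_nhdsWithin_of_eventually_nhds (tendsto_id.eventually_const_lt hTa)]
          with s hs hs2
        exact hvlt hamem hs hs2
      · filter_upwards [self_mem_nhdsWithin] with s hs
        exact lt_of_le_of_lt (hvmem s hs).2 halam
  -- v tends to 0 at infinity
  have hvtend : Tendsto (fun t => v t lam) atTop (𝓝 0) := by
    refine tendsto_order.2 ⟨?_, ?_⟩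
    · intro a ha
      filter_upwards [eventually_ge_atTop (0:ℝ)] with t ht
      exact lt_of_lt_of_le ha (hvmem t ht).1.le
    · intro a ha
      have hmem : min a lam ∈ Ioc 0 lam := ⟨lt_min ha hlam, min_le_right _ _⟩
      filter_upwards [eventually_ge_atTop (0:ℝ),
        eventually_gt_atTop (T (min a lam))] with t ht ht2
      exact lt_of_lt_of_le (hvlt hmem ht ht2) (min_le_left _ _)
  -- continuity of s ↦ Fim (v s lam)
  have hFv_cont : ContinuousOn (fun s => Fim β n (v s lam)) (Ici 0) :=
    hFcont.comp hvcont fun s hs => (hvmem s hs).1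
  -- substitution
  have hsub : ∀ t : ℝ, 0 ≤ t →
      ∫ s in (0:ℝ)..t, Fim β n (v s lam) = ∫ z in (v t lam)..lam, g2 z := by
    intro t ht
    have hvm := hvmem t ht
    have huIcc' : uIcc (v t lam) lam ⊆ Ioi 0 := huIcc hvm.1 hlam
    have hIccIoc : uIcc (v t lam) lam ⊆ Ioc 0 lam := by
      rw [uIcc_of_le hvm.2]
      exact fun w hw => ⟨hvm.1.trans_le hw.1, hw.2⟩
    have hderiv : ∀ x ∈ uIcc (v t lam) lam, HasDerivAt T (-(g x)) x := by
      intro x hx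
      have hx0 : 0 < x := huIcc' hx
      exact intervalIntegral.integral_hasDerivAt_left (hgii hx0 hlam)
        (ContinuousOn.stronglyMeasurableAtFilter isOpen_Ioi hgcont x hx0)
        (hgcont.continuousAt (Ioi_mem_nhds hx0))
    have hcont' : ContinuousOn (fun x => -(g x)) (uIcc (v t lam) lam) :=
      (hgcont.mono huIcc').neg
    have himg : T '' uIcc (v t lam) lam ⊆ Ici 0 := by
      rintro _ ⟨x, hx, rfl⟩
      exact hTnonneg (huIcc' hx) (hIccIoc hx).2
    have hgfun_cont : ContinuousOn (fun s => Fim β n (v s lam)) (T '' uIcc (v t lam) lam) :=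
      hFv_cont.mono himg
    have h1 := intervalIntegral.integral_comp_smul_deriv' hderiv hcont' hgfun_cont
    have h2 : EqOn (fun x => (-(g x)) • ((fun s => Fim β n (v s lam)) ∘ T) x)
        (fun x => -(g2 x)) (uIcc (v t lam) lam) := by
      intro x hx
      have : v (T x) lam = x := hvTz (hIccIoc hx)
      simp only [Function.comp, smul_eq_mul, this]
      rw [hg2_def, hg_def]
      ring
    rw [intervalIntegral.integral_congr h2] at h1
    rw [hvT t ht, hTlam] at h1
    have h3 : -∫ x in (v t lam)..lam, g2 x = -∫ s in (0:ℝ)..t, Fim β n (v s lam) := by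
      rw [← intervalIntegral.integral_neg, h1, intervalIntegral.integral_symm 0 t]
    linarith [h3]
  -- integrability of g2 near 0 and on Ioc 0 lam
  obtain ⟨lam0, hlam0, hint0⟩ := hA2
  have hg2Ioo : IntegrableOn g2 (Ioo 0 lam) := by
    rcases le_or_gt lam lam0 with h | h
    · exact hint0.mono_set (Ioo_subset_Ioo le_rfl h)
    · have hIccInt : IntegrableOn g2 (Icc lam0 lam) :=
        (hg2cont.mono (fun w hw => lt_of_lt_of_le hlam0 hw.1)).integrableOn_Icc
      refine (hint0.union hIccInt).mono_set ?_
      intro w hw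
      rcases lt_or_ge w lam0 with h2 | h2
      · exact Or.inl ⟨hw.1, h2⟩
      · exact Or.inr ⟨h2, hw.2.le⟩
  have hg2Ioc : IntegrableOn g2 (Ioc 0 lam) := by
    rwa [integrableOn_Ioc_iff_integrableOn_Ioo]
  have hg2ii0 : IntervalIntegrable g2 volume 0 lam :=
    (intervalIntegrable_iff_integrableOn_Ioc_of_le hlam.le).2 hg2Ioc
  have hg2nn_ae : 0 ≤ᵐ[volume.restrict (Ioc 0 lam)] g2 := by
    rw [EventuallyLE, ae_restrict_iff' measurableSet_Ioc]
    exact ae_of_all _ fun z hz =>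
      div_nonneg (Fim_nonneg hβ hz.1.le) (hψpos z hz.1).le
  set J : ℝ := ∫ z in Ioc (0:ℝ) lam, g2 z with hJ_def
  -- bound on partial integrals
  have hbd : ∀ t : ℝ, 0 ≤ t → (∫ s in (0:ℝ)..t, Fim β n (v s lam)) ≤ J := by
    intro t ht
    rw [hsub t ht, intervalIntegral.integral_of_le (hvmem t ht).2]
    exact setIntegral_mono_set hg2Ioc hg2nn_ae
      (HasSubset.Subset.eventuallyLE (Ioc_subset_Ioc (hvmem t ht).1.le le_rfl))
  -- integrability of the time integral
  have hgfun_int : ∀ k : ℝ, IntegrableOn (fun s => Fim β n (v s lam)) (Ioc 0 k) := by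
    intro k
    rcases le_or_gt k 0 with h | h
    · rw [Ioc_eq_empty (by exact fun hh => absurd hh (not_lt.2 h))]
      exact integrableOn_empty
    · exact ((hFv_cont.mono (Icc_subset_Ici_self : Icc (0:ℝ) k ⊆ Ici 0)).integrableOn_Icc).mono_set
        Ioc_subset_Icc_self
  have hInt : IntegrableOn (fun s => Fim β n (v s lam)) (Ioi 0) := by
    refine integrableOn_Ioi_of_intervalIntegral_norm_bounded J 0
      (b := fun i : ℕ => (i : ℝ)) (fun i => hgfun_int i) tendsto_natCast_atTop_atTop ?_
    refine Filter.Eventually.of_forall fun i => ?_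
    have hnorm : EqOn (fun s => ‖Fim β n (v s lam)‖) (fun s => Fim β n (v s lam))
        (uIcc 0 (i:ℝ)) := by
      intro s hs
      rw [uIcc_of_le (Nat.cast_nonneg i)] at hs
      exact Real.norm_of_nonneg (Fim_nonneg hβ (hvmem s hs.1).1.le)
    rw [intervalIntegral.integral_congr hnorm]
    exact hbd _ (Nat.cast_nonneg i)
  refine ⟨hInt, hg2Ioc, ?_⟩
  -- value of the integral
  have h1 : Tendsto (fun t : ℝ => ∫ s in (0:ℝ)..t, Fim β n (v s lam)) atTop
      (𝓝 (∫ s in Ioi (0:ℝ), Fim β n (v s lam))) :=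
    intervalIntegral_tendsto_integral_Ioi 0 hInt tendsto_id
  have hg2Icc : IntegrableOn g2 (Icc 0 lam) := by
    rwa [integrableOn_Icc_iff_integrableOn_Ioc]
  have hprim := intervalIntegral.continuousOn_primitive (f := g2) (a := 0) (b := lam)
    (μ := volume) hg2Icc
  have hP0 : ContinuousWithinAt (fun x => ∫ z in Ioc (0:ℝ) x, g2 z) (Icc 0 lam) 0 :=
    hprim 0 ⟨le_rfl, hlam.le⟩
  have hvtend' : Tendsto (fun t => v t lam) atTop (𝓝[Icc 0 lam] 0) := by
    rw [tendsto_nhdsWithin_iff]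
    refine ⟨hvtend, ?_⟩
    filter_upwards [eventually_ge_atTop (0:ℝ)] with t ht
    exact ⟨(hvmem t ht).1.le, (hvmem t ht).2⟩
  have hPtend : Tendsto (fun t => ∫ z in Ioc (0:ℝ) (v t lam), g2 z) atTop (𝓝 0) := by
    have := hP0.tendsto.comp hvtend'
    simpa [Function.comp_def] using this
  have h2 : Tendsto (fun t : ℝ => ∫ s in (0:ℝ)..t, Fim β n (v s lam)) atTop (𝓝 J) := by
    have heq : ∀ᶠ t in atTop, (∫ s in (0:ℝ)..t, Fim β n (v s lam))
        = J - ∫ z in Ioc (0:ℝ) (v t lam), g2 z := by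
      filter_upwards [eventually_ge_atTop (0:ℝ)] with t ht
      rw [hsub t ht]
      have hvm := hvmem t ht
      have hii1 : IntervalIntegrable g2 volume 0 (v t lam) := by
        refine hg2ii0.mono_set ?_
        rw [uIcc_of_le hvm.1.le, uIcc_of_le hlam.le]
        exact Icc_subset_Icc le_rfl hvm.2
      have hadj : (∫ z in (0:ℝ)..(v t lam), g2 z) + ∫ z in (v t lam)..lam, g2 z
          = ∫ z in (0:ℝ)..lam, g2 z :=
        intervalIntegral.integral_add_adjacent_intervals hii1
          ((hg2cont.mono (huIcc hvm.1 hlam)).intervalIntegrable)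
      have e1 : (∫ z in (0:ℝ)..(v t lam), g2 z) = ∫ z in Ioc (0:ℝ) (v t lam), g2 z :=
        intervalIntegral.integral_of_le hvm.1.le
      have e2 : (∫ z in (0:ℝ)..lam, g2 z) = J :=
        intervalIntegral.integral_of_le hlam.le
      linarith
    exact (Filter.tendsto_congr' heq).2 (by simpa using hPtend.const_sub J)
  exact tendsto_nhds_unique h1 h2


end helperlemmas

theorem G_finite_and_deriv (b σ β : ℝ) (m n : Measure ℝ)
    (hb : 0 ≤ b) (hσ : 0 ≤ σ) (hβ : 0 ≤ β)
    (hm : IntegrableOn (fun u => min u (u ^ 2)) (Ioi 0) m)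
    (hn : IntegrableOn (fun u => min 1 u) (Ioi 0) n)
    (hA2 : condA2 b σ β m n) (hA3 : condA3 σ m)
    (v : ℝ → ℝ → ℝ) (hv : IsCumulant b σ m v)
    (hv0 : ∀ t ≥ (0 : ℝ), v t 0 = 0) :
    (∀ lam ≥ (0 : ℝ), IntegrableOn (fun s => Fim β n (v s lam)) (Ioi 0)) ∧
    (∀ lam > (0 : ℝ),
      HasDerivAt (fun x => ∫ s in Ioi (0 : ℝ), Fim β n (v s x))
        (Fim β n lam / psi b σ m lam) lam) := by

  set g2 : ℝ → ℝ := fun z => Fim β n z / psi b σ m z with hg2_def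
  have hψpos : ∀ z : ℝ, 0 < z → 0 < psi b σ m z := fun z hz => psi_pos hb hσ hm hA3 hz
  have hg2cont : ContinuousOn g2 (Ioi 0) :=
    (fun z hz => ((Fim_continuousAt hn hz).div (psi_continuousAt hm hz)
      (hψpos z hz).ne').continuousWithinAt)
  have hg2ii : ∀ {x y : ℝ}, 0 < x → 0 < y → IntervalIntegrable g2 volume x y := by
    intro x y hx hy
    refine (hg2cont.mono ?_).intervalIntegrable
    exact fun w hw => lt_of_lt_of_le (lt_min hx hy) hw.1
  constructor
  · intro lam hlam
    rcases eq_or_lt_of_le hlam with rfl | hlam'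
    · have heq : EqOn (fun s => Fim β n (v s 0)) (fun _ => (0:ℝ)) (Ioi 0) := by
        intro s hs
        simp only
        rw [hv0 s (le_of_lt hs), Fim_zero]
      exact (integrableOn_congr_fun heq measurableSet_Ioi).2 (integrableOn_zero)
    · exact (key_lemma hb hσ hβ hm hn hA2 hA3 v hv hlam').1
  · intro lam hlam
    set c : ℝ := lam / 2 with hc_def
    have hc : 0 < c := by positivity
    have hclam : c < lam := by rw [hc_def]; linarith
    -- G x = const + ∫ c..x g2, eventually near lam
    have hkey : ∀ x : ℝ, c < x →
        (∫ s in Ioi (0:ℝ), Fim β n (v s x)) =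
          (∫ z in Ioc (0:ℝ) c, g2 z) + ∫ z in c..x, g2 z := by
      intro x hx
      have hx0 : 0 < x := hc.trans hx
      rw [(key_lemma hb hσ hβ hm hn hA2 hA3 v hv hx0).2.2]
      have hIoc : IntegrableOn g2 (Ioc 0 x) :=
        (key_lemma hb hσ hβ hm hn hA2 hA3 v hv hx0).2.1
      have hii1 : IntervalIntegrable g2 volume 0 c :=
        (intervalIntegrable_iff_integrableOn_Ioc_of_le hc.le).2
          (hIoc.mono_set (Ioc_subset_Ioc le_rfl hx.le))
      have hadj : (∫ z in (0:ℝ)..c, g2 z) + ∫ z in c..x, g2 z = ∫ z in (0:ℝ)..x, g2 z :=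
        intervalIntegral.integral_add_adjacent_intervals hii1 (hg2ii hc hx0)
      have e1 : (∫ z in (0:ℝ)..c, g2 z) = ∫ z in Ioc (0:ℝ) c, g2 z :=
        intervalIntegral.integral_of_le hc.le
      have e2 : (∫ z in (0:ℝ)..x, g2 z) = ∫ z in Ioc (0:ℝ) x, g2 z :=
        intervalIntegral.integral_of_le hx0.le
      rw [← e2, ← hadj, e1]
    have hd : HasDerivAt (fun x => (∫ z in Ioc (0:ℝ) c, g2 z) + ∫ z in c..x, g2 z)
        (g2 lam) lam := by
      refine HasDerivAt.const_add _ ?_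
      refine intervalIntegral.integral_hasDerivAt_right (hg2ii hc hlam) ?_ ?_
      · exact ContinuousOn.stronglyMeasurableAtFilter isOpen_Ioi hg2cont lam hlam
      · exact hg2cont.continuousAt (Ioi_mem_nhds hlam)
    refine HasDerivAt.congr_of_eventuallyEq hd ?_
    filter_upwards [Ioi_mem_nhds hclam] with x hx
    exact hkey x hx
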